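/- Let H_A = H_B be a finite-dimensional Hilbert space of dimension d ≥ 2 and let ρ* be a maximally entangled pure state on H_A ⊗ H_B. Then the trace-norm distance from ρ* to the set of separable states satisfies D_s(ρ*) ≥ 2 − (4 log 2)/(log d). -/

import Mathlib

open scoped Matrix Kronecker Classical ComplexOrder ENNReal

noncomputable section

namespace QPaper

/-- The trace norm `‖A‖₁ = Tr √(AᴴA)` of a matrix, computed as the sum of its
singular values (square roots of the eigenvalues of `AᴴA`). -/
def traceNorm {n : Type*} [Fintype n] [DecidableEq n] (A : Matrix n n ℂ) : ℝ :=
  ∑ i, Real.sqrt ((Matrix.posSemidef_conjTranspose_mul_self A).1.eigenvalues i)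

/-- A quantum state: a positive semidefinite matrix of unit trace. -/
def IsState {n : Type*} [Fintype n] [DecidableEq n] (ρ : Matrix n n ℂ) : Prop :=
  ρ.PosSemidef ∧ ρ.trace = 1

/-- A pure state: a state which is a rank-one projection `|v⟩⟨v|`. -/
def IsPure {n : Type*} [Fintype n] [DecidableEq n] (ρ : Matrix n n ℂ) : Prop :=
  IsState ρ ∧ ∃ v : n → ℂ, ρ = Matrix.vecMulVec v (star v)

/-- The von Neumann entropy `H(ρ) = -Tr ρ log ρ`, via the eigenvalues of `ρ`. -/
def vnEntropy {n : Type*} [Fintype n] [DecidableEq n] (ρ : Matrix n n ℂ) : ℝ :=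
  if h : ρ.IsHermitian then ∑ i, Real.negMulLog (h.eigenvalues i) else 0

/-- The logarithm of a Hermitian matrix, via the spectral decomposition
(junk value `0` on non-Hermitian matrices). -/
def matLog {n : Type*} [Fintype n] [DecidableEq n] (ρ : Matrix n n ℂ) : Matrix n n ℂ :=
  if h : ρ.IsHermitian then
    (h.eigenvectorUnitary : Matrix n n ℂ) *
      Matrix.diagonal (fun i => (Real.log (h.eigenvalues i) : ℂ)) *
      (star (h.eigenvectorUnitary : Matrix n n ℂ)) else 0

/-- The quantum relative entropy `H(ρ‖σ) = Tr(ρ log ρ - ρ log σ)` when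
`supp ρ ⊆ supp σ`, and `+∞` otherwise (as a value in `ℝ≥0∞`). -/
def relEntropy {n : Type*} [Fintype n] [DecidableEq n] (ρ σ : Matrix n n ℂ) : ℝ≥0∞ :=
  if ∀ v : n → ℂ, σ.mulVec v = 0 → ρ.mulVec v = 0 then
    ENNReal.ofReal ((ρ * (matLog ρ - matLog σ)).trace.re) else ⊤

/-- Partial trace over the second tensor factor. -/
def ptrace2 {n m : Type*} [Fintype n] [Fintype m]
    (ρ : Matrix (n × m) (n × m) ℂ) : Matrix n n ℂ :=
  Matrix.of fun i j => ∑ k, ρ (i, k) (j, k)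

/-- Partial trace over the first tensor factor. -/
def ptrace1 {n m : Type*} [Fintype n] [Fintype m]
    (ρ : Matrix (n × m) (n × m) ℂ) : Matrix m m ℂ :=
  Matrix.of fun i j => ∑ k, ρ (k, i) (k, j)

/-- A bipartite state is separable if it lies in the convex hull of product states. -/
def IsSeparable {n m : Type*} [Fintype n] [DecidableEq n] [Fintype m] [DecidableEq m]
    (ρ : Matrix (n × m) (n × m) ℂ) : Prop :=
  ρ ∈ convexHull ℝ {τ : Matrix (n × m) (n × m) ℂ |
    ∃ (a : Matrix n n ℂ) (b : Matrix m m ℂ), IsState a ∧ IsState b ∧ τ = a ⊗ₖ b}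

/-- The relative entropy of entanglement `E_R(ρ) = inf_{σ separable} H(ρ‖σ)`. -/
def relEntEnt {n m : Type*} [Fintype n] [DecidableEq n] [Fintype m] [DecidableEq m]
    (ρ : Matrix (n × m) (n × m) ℂ) : ℝ≥0∞ :=
  ⨅ σ ∈ {σ : Matrix (n × m) (n × m) ℂ | IsState σ ∧ IsSeparable σ}, relEntropy ρ σ

/-- The trace-norm distance from `ρ` to the set of separable states. -/
def Dsep {n m : Type*} [Fintype n] [DecidableEq n] [Fintype m] [DecidableEq m]
    (ρ : Matrix (n × m) (n × m) ℂ) : ℝ :=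
  sInf {x : ℝ | ∃ σ : Matrix (n × m) (n × m) ℂ,
    IsState σ ∧ IsSeparable σ ∧ x = traceNorm (ρ - σ)}

/-- The binary entropy `h₂(x) = -x log x - (1-x) log (1-x)`. -/
def binEnt (x : ℝ) : ℝ := Real.negMulLog x + Real.negMulLog (1 - x)

/-- The function `g(x) = (1+x) h₂(x/(1+x))`, with the convention `g(x) = 0` for `x < 0`. -/
def gg (x : ℝ) : ℝ := if 0 ≤ x then (1 + x) * binEnt (x / (1 + x)) else 0

section Channels

variable {A B E : Type*} [Fintype A] [DecidableEq A] [Fintype B] [DecidableEq B]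
  [Fintype E] [DecidableEq E]

/-- The map `Φ ⊗ Id_R` applied to an operator on `H_A ⊗ H_R`. -/
def tensorId {R : Type*} [Fintype R] [DecidableEq R]
    (Φ : Matrix A A ℂ →ₗ[ℂ] Matrix B B ℂ) (ρ : Matrix (A × R) (A × R) ℂ) :
    Matrix (B × R) (B × R) ℂ :=
  Matrix.of fun ik jl => Φ (Matrix.of fun p q => ρ (p, ik.2) (q, jl.2)) ik.1 jl.1

/-- Complete positivity of a linear map between matrix spaces. -/
def IsCP (Φ : Matrix A A ℂ →ₗ[ℂ] Matrix B B ℂ) : Prop :=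
  ∀ (r : ℕ) (ρ : Matrix (A × Fin r) (A × Fin r) ℂ), ρ.PosSemidef → (tensorId Φ ρ).PosSemidef

/-- Trace preservation. -/
def IsTP (Φ : Matrix A A ℂ →ₗ[ℂ] Matrix B B ℂ) : Prop := ∀ ρ, (Φ ρ).trace = ρ.trace

/-- A quantum channel: a completely positive trace-preserving linear map. -/
def IsChannel (Φ : Matrix A A ℂ →ₗ[ℂ] Matrix B B ℂ) : Prop := IsCP Φ ∧ IsTP Φ

/-- The diamond norm `‖Φ‖_◇ = sup_R sup_{‖ρ‖₁ = 1} ‖(Φ ⊗ Id_R)(ρ)‖₁`. -/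
def diamondNorm (Φ : Matrix A A ℂ →ₗ[ℂ] Matrix B B ℂ) : ℝ :=
  sSup {x : ℝ | ∃ (r : ℕ) (ρ : Matrix (A × Fin r) (A × Fin r) ℂ),
    traceNorm ρ = 1 ∧ x = traceNorm (tensorId Φ ρ)}

/-- `V` is a Stinespring isometry for `Φ` (with environment `E`):
`Vᴴ V = 1` and `Φ(ρ) = Tr_E (V ρ Vᴴ)`. -/
def IsStinespring (Φ : Matrix A A ℂ →ₗ[ℂ] Matrix B B ℂ) (V : Matrix (B × E) A ℂ) : Prop :=
  Vᴴ * V = 1 ∧ ∀ ρ, Φ ρ = ptrace2 (V * ρ * Vᴴ)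

/-- The channel complementary to the one given by the Stinespring isometry `V`:
`Φ̂(ρ) = Tr_B (V ρ Vᴴ)`. -/
def compl (V : Matrix (B × E) A ℂ) (ρ : Matrix A A ℂ) : Matrix E E ℂ :=
  ptrace1 (V * ρ * Vᴴ)

/-- The coherent information `I_c(Φ, ρ) = H(Φ(ρ)) - H(Φ̂(ρ))` of the channel `Φ` with
Stinespring isometry `V` at the input state `ρ`. -/
def cohInfo (Φ : Matrix A A ℂ →ₗ[ℂ] Matrix B B ℂ) (V : Matrix (B × E) A ℂ)
    (ρ : Matrix A A ℂ) : ℝ :=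
  vnEntropy (Φ ρ) - vnEntropy (compl V ρ)

/-- A channel is degradable if `Φ̂ = Θ ∘ Φ` for some channel `Θ : B → E`. -/
def IsDegradable (Φ : Matrix A A ℂ →ₗ[ℂ] Matrix B B ℂ) : Prop :=
  ∃ (e : ℕ) (V : Matrix (B × Fin e) A ℂ), IsStinespring Φ V ∧
    ∃ Θ : Matrix B B ℂ →ₗ[ℂ] Matrix (Fin e) (Fin e) ℂ,
      IsChannel Θ ∧ ∀ ρ, compl V ρ = Θ (Φ ρ)

/-- A channel is antidegradable if its complementary channel is degradable, i.e.
`Φ = Θ ∘ Φ̂` for some channel `Θ : E → B`. -/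
def IsAntidegradable (Φ : Matrix A A ℂ →ₗ[ℂ] Matrix B B ℂ) : Prop :=
  ∃ (e : ℕ) (V : Matrix (B × Fin e) A ℂ), IsStinespring Φ V ∧
    ∃ Θ : Matrix (Fin e) (Fin e) ℂ →ₗ[ℂ] Matrix B B ℂ,
      IsChannel Θ ∧ ∀ ρ, Φ ρ = Θ (compl V ρ)

/-- A channel is entanglement-breaking if `(Φ ⊗ Id_R)(ω)` is separable for every state `ω`
and every auxiliary system `R`. -/
def IsEB (Φ : Matrix A A ℂ →ₗ[ℂ] Matrix B B ℂ) : Prop :=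
  ∀ (r : ℕ) (ω : Matrix (A × Fin r) (A × Fin r) ℂ), IsState ω → IsSeparable (tensorId Φ ω)

/-- Diamond-norm distance from `Φ` to the set of degradable channels. -/
def Dd (Φ : Matrix A A ℂ →ₗ[ℂ] Matrix B B ℂ) : ℝ :=
  sInf {x : ℝ | ∃ Ψ : Matrix A A ℂ →ₗ[ℂ] Matrix B B ℂ,
    IsChannel Ψ ∧ IsDegradable Ψ ∧ x = diamondNorm (Φ - Ψ)}

/-- Diamond-norm distance from `Φ` to the set of antidegradable channels. -/
def Da (Φ : Matrix A A ℂ →ₗ[ℂ] Matrix B B ℂ) : ℝ :=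
  sInf {x : ℝ | ∃ Ψ : Matrix A A ℂ →ₗ[ℂ] Matrix B B ℂ,
    IsChannel Ψ ∧ IsAntidegradable Ψ ∧ x = diamondNorm (Φ - Ψ)}

/-- Diamond-norm distance from `Φ` to the set of entanglement-breaking channels. -/
def Deb (Φ : Matrix A A ℂ →ₗ[ℂ] Matrix B B ℂ) : ℝ :=
  sInf {x : ℝ | ∃ Ψ : Matrix A A ℂ →ₗ[ℂ] Matrix B B ℂ,
    IsChannel Ψ ∧ IsEB Ψ ∧ x = diamondNorm (Φ - Ψ)}

end Channels


/-- A maximally entangled pure state on `H_A ⊗ H_B` with `dim H_A = dim H_B = d`: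
the projection onto the unit vector `(1/√d) ∑ i, |i⟩ ⊗ |i⟩` for an orthonormal basis. -/
def IsMaxEntangled {d : ℕ} (ρ : Matrix (Fin d × Fin d) (Fin d × Fin d) ℂ) : Prop :=
  ∃ e : Fin d → Fin d → ℂ,
    (∀ i j, ∑ a, (starRingEnd ℂ) (e i a) * e j a = if i = j then 1 else 0) ∧
    ρ = Matrix.vecMulVec (fun p => ((Real.sqrt d : ℝ) : ℂ)⁻¹ * ∑ i, e i p.1 * e i p.2)
      (star fun p => ((Real.sqrt d : ℝ) : ℂ)⁻¹ * ∑ i, e i p.1 * e i p.2)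

/-- The inclusion isometry `H_A → H_B` (for `nA ≤ nB`) in the standard bases. -/
def inclV (nA nB : ℕ) : Matrix (Fin nB) (Fin nA) ℂ :=
  Matrix.of fun i j => if (i : ℕ) = (j : ℕ) then 1 else 0

/-- The identity embedding channel of states on `H_A` into states on `H_B ⊇ H_A`. -/
def embedChannel (nA nB : ℕ) : Matrix (Fin nA) (Fin nA) ℂ →ₗ[ℂ] Matrix (Fin nB) (Fin nB) ℂ where
  toFun ρ := inclV nA nB * ρ * (inclV nA nB)ᴴ
  map_add' x y := by simp [Matrix.mul_add, Matrix.add_mul]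
  map_smul' c x := by simp [Matrix.mul_smul, Matrix.smul_mul]

/-- The isometric embedding `H_A → H_B` used by the erasure channel, `dim H_B = d + 1`. -/
def eraV (d : ℕ) : Matrix (Fin (d + 1)) (Fin d) ℂ :=
  Matrix.of fun i j => if (i : ℕ) = (j : ℕ) then 1 else 0

/-- The erasure channel `Φ_p(ρ) = (1-p) ρ ⊕ p (Tr ρ) |φ⟩⟨φ|` from a `d`-dimensional system
to a `(d+1)`-dimensional one, `φ` being the last basis vector (orthogonal to `H_A`). -/
def erasure (d : ℕ) (p : ℝ) :
    Matrix (Fin d) (Fin d) ℂ →ₗ[ℂ] Matrix (Fin (d + 1)) (Fin (d + 1)) ℂ where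
  toFun ρ := ((1 : ℂ) - (p : ℂ)) • (eraV d * ρ * (eraV d)ᴴ) +
    ((p : ℂ) * ρ.trace) • Matrix.single (Fin.last d) (Fin.last d) (1 : ℂ)
  map_add' x y := by
    simp [Matrix.mul_add, Matrix.add_mul, Matrix.trace_add, mul_add, add_smul, smul_add]
    abel
  map_smul' c x := by
    simp [Matrix.mul_smul, Matrix.smul_mul, Matrix.trace_smul, smul_smul, smul_add,
      mul_left_comm, smul_comm c]


/-! ### Auxiliary lemmas for the separability distance bound -/

lemma re_dotProduct_le_cs {n : Type*} [Fintype n] (x y : n → ℂ) :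
    (dotProduct (star x) y).re ≤
      Real.sqrt (∑ i, ‖x i‖^2) * Real.sqrt (∑ i, ‖y i‖^2) := by
  have h := norm_inner_le_norm (𝕜 := ℂ) ((WithLp.equiv 2 (n → ℂ)).symm x)
    ((WithLp.equiv 2 (n → ℂ)).symm y)
  rw [show inner ℂ ((WithLp.equiv 2 (n → ℂ)).symm x) ((WithLp.equiv 2 (n → ℂ)).symm y) = dotProduct (star x) y from by rw [dotProduct_comm]; rfl] at h
  have h1 : ‖(WithLp.equiv 2 (n → ℂ)).symm x‖ = Real.sqrt (∑ i, ‖x i‖^2) := by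
    rw [EuclideanSpace.norm_eq]; rfl
  have h2 : ‖(WithLp.equiv 2 (n → ℂ)).symm y‖ = Real.sqrt (∑ i, ‖y i‖^2) := by
    rw [EuclideanSpace.norm_eq]; rfl
  rw [h1, h2] at h
  exact le_trans (Complex.re_le_norm _) h

lemma conj_entry {n : Type*} [Fintype n] [DecidableEq n] (M U : Matrix n n ℂ) (i : n) :
    (star U * M * U) i i = dotProduct (star (fun p => U p i)) (M *ᵥ (fun p => U p i)) := by
  simp only [Matrix.mul_apply, Matrix.mulVec, dotProduct, Matrix.star_apply,
    Pi.star_apply, Finset.sum_mul, Finset.mul_sum]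
  rw [Finset.sum_comm]
  congr 1; ext p; congr 1; ext q; ring

lemma sum_normSq_eq {n : Type*} [Fintype n] (x : n → ℂ) :
    ∑ i, ‖x i‖^2 = (dotProduct (star x) x).re := by
  rw [dotProduct, Complex.re_sum]
  refine Finset.sum_congr rfl fun i _ => ?_
  rw [Pi.star_apply, Complex.star_def, Complex.sq_norm, Complex.normSq_apply,
    Complex.mul_re, Complex.conj_re, Complex.conj_im]
  ring

lemma re_trace_mul_le_traceNorm {n : Type*} [Fintype n] [DecidableEq n]
    (A B : Matrix n n ℂ)
    (hB : ∀ x : n → ℂ, ∑ i, ‖(Bᴴ *ᵥ x) i‖^2 ≤ ∑ i, ‖x i‖^2) :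
    ((B * A).trace).re ≤ traceNorm A := by
  set hH := (Matrix.posSemidef_conjTranspose_mul_self A).1 with hHdef
  set U : Matrix n n ℂ := (hH.eigenvectorUnitary : Matrix n n ℂ) with hUdef
  have hU2 : U * star U = 1 := (Matrix.mem_unitaryGroup_iff).mp hH.eigenvectorUnitary.2
  have hU1 : star U * U = 1 := mul_eq_one_comm.mp hU2
  have htr : (B * A).trace = (star U * (B * A) * U).trace := by
    rw [Matrix.trace_mul_cycle, ← mul_assoc, hU2, one_mul]
  rw [htr, Matrix.trace, Complex.re_sum]
  show _ ≤ ∑ i, Real.sqrt (hH.eigenvalues i)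
  refine Finset.sum_le_sum fun i _ => ?_
  set u : n → ℂ := fun p => U p i with hu
  have hdiag : (dotProduct (star u) ((Aᴴ * A) *ᵥ u)).re = hH.eigenvalues i := by
    rw [← conj_entry, show star U * (Aᴴ * A) * U = Matrix.diagonal (RCLike.ofReal ∘ hH.eigenvalues) from by
      conv_lhs => rw [show Aᴴ * A = U * Matrix.diagonal (RCLike.ofReal ∘ hH.eigenvalues) * star U from hH.spectral_theorem]
      simp only [← mul_assoc, hU1, one_mul]
      rw [mul_assoc, hU1, mul_one]]
    simp [Matrix.diagonal_apply_eq]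
  have hAu : ∑ p, ‖(A *ᵥ u) p‖^2 = hH.eigenvalues i := by
    rw [sum_normSq_eq, Matrix.star_mulVec, Matrix.dotProduct_mulVec, Matrix.vecMul_vecMul,
      ← Matrix.dotProduct_mulVec]
    exact hdiag
  have hnu : ∑ p, ‖u p‖^2 = 1 := by
    rw [sum_normSq_eq]
    have : dotProduct (star u) u = (star U * U) i i := by
      simp [Matrix.mul_apply, dotProduct, hu]
    rw [this, hU1]
    simp
  have hBd : dotProduct (star u) ((B * A) *ᵥ u)
      = dotProduct (star (Bᴴ *ᵥ u)) (A *ᵥ u) := by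
    rw [Matrix.star_mulVec, Matrix.conjTranspose_conjTranspose, ← Matrix.mulVec_mulVec,
      Matrix.dotProduct_mulVec]
  calc ((star U * (B * A) * U).diag i).re
      = (dotProduct (star (Bᴴ *ᵥ u)) (A *ᵥ u)).re := by
        rw [Matrix.diag, conj_entry, hBd]
    _ ≤ Real.sqrt (∑ p, ‖(Bᴴ *ᵥ u) p‖^2) * Real.sqrt (∑ p, ‖(A *ᵥ u) p‖^2) :=
        re_dotProduct_le_cs _ _
    _ ≤ 1 * Real.sqrt (hH.eigenvalues i) := by
        rw [hAu]
        gcongr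
        calc Real.sqrt (∑ p, ‖(Bᴴ *ᵥ u) p‖^2) ≤ Real.sqrt (∑ p, ‖u p‖^2) :=
              Real.sqrt_le_sqrt (hB u)
          _ = 1 := by rw [hnu, Real.sqrt_one]
    _ = Real.sqrt (hH.eigenvalues i) := one_mul _

lemma entry_re_nonneg {n : Type*} [Fintype n] [DecidableEq n]
    {M : Matrix n n ℂ} (hM : M.PosSemidef) (i : n) : 0 ≤ (M i i).re := by
  have h := hM.dotProduct_mulVec_nonneg (Pi.single i 1)
  have : dotProduct (star (Pi.single i 1 : n → ℂ)) (M *ᵥ Pi.single i 1) = M i i := by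
    simp [Matrix.mulVec_single, dotProduct, Pi.single_apply, Finset.sum_ite_eq,
      Matrix.star_apply]
  rw [this] at h
  exact (Complex.le_def.mp h).1

lemma re_trace_mul_le_one {n : Type*} [Fintype n] [DecidableEq n]
    {A C : Matrix n n ℂ} (hA : A.PosSemidef) (hC : C.PosSemidef)
    (hTA : A.trace = 1) (hTC : C.trace = 1) :
    ((A * C).trace).re ≤ 1 := by
  have hHC := hC.1
  set V : Matrix n n ℂ := (hHC.eigenvectorUnitary : Matrix n n ℂ) with hV
  have hU2 : V * star V = 1 := (Matrix.mem_unitaryGroup_iff).mp hHC.eigenvectorUnitary.2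
  have hU1 : star V * V = 1 := mul_eq_one_comm.mp hU2
  set D : Matrix n n ℂ := Matrix.diagonal (RCLike.ofReal ∘ hHC.eigenvalues) with hD
  have hspec : C = V * D * star V := hHC.spectral_theorem
  set M : Matrix n n ℂ := star V * A * V with hM
  have hMpsd : M.PosSemidef := by
    have := hA.conjTranspose_mul_mul_same V
    simpa [hM, Matrix.star_eq_conjTranspose] using this
  have htrM : M.trace = 1 := by
    rw [hM, Matrix.trace_mul_comm, ← mul_assoc, hU2, one_mul, hTA]
  have htrAC : (A * C).trace = (M * D).trace := by
    rw [hspec]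
    rw [show A * (V * D * star V) = (A * V * D) * star V by simp [mul_assoc]]
    rw [Matrix.trace_mul_comm]
    rw [show star V * (A * V * D) = M * D by simp [hM, mul_assoc]]
  have hμsum : ∑ i, hHC.eigenvalues i = 1 := by
    have hDtr : D.trace = 1 := by
      have : C.trace = D.trace := by
        rw [hspec, Matrix.trace_mul_comm, ← mul_assoc, hU1, one_mul]
      rw [← this, hTC]
    rw [hD] at hDtr
    have := congrArg Complex.re hDtr
    simpa [Matrix.trace_diagonal, Complex.re_sum] using this
  have hμnn : ∀ i, 0 ≤ hHC.eigenvalues i := hC.eigenvalues_nonneg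
  have hMd : ∀ i, (M i i).re ≤ 1 := by
    intro i
    have hsum : ∑ j, (M j j).re = 1 := by
      have := congrArg Complex.re htrM
      simpa [Matrix.trace, Matrix.diag, Complex.re_sum] using this
    rw [← hsum]
    exact Finset.single_le_sum (fun j _ => entry_re_nonneg hMpsd j) (Finset.mem_univ i)
  rw [htrAC, Matrix.trace, Complex.re_sum]
  calc ∑ i, ((M * D).diag i).re = ∑ i, (M i i).re * hHC.eigenvalues i := by
        refine Finset.sum_congr rfl fun i _ => ?_
        simp [Matrix.diag, Matrix.mul_diagonal, hD, Complex.mul_re]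
    _ ≤ ∑ i, 1 * hHC.eigenvalues i := by
        refine Finset.sum_le_sum fun i _ => ?_
        exact mul_le_mul_of_nonneg_right (hMd i) (hμnn i)
    _ = 1 := by simp [hμsum]

lemma vec_dot_vec {n m : Type*} [Fintype n] [Fintype m]
    (M N : Matrix n m ℂ) :
    dotProduct (star (fun p : n × m => M p.1 p.2)) (fun p : n × m => N p.1 p.2)
      = (Mᴴ * N).trace := by
  simp only [dotProduct, Matrix.trace, Matrix.diag, Matrix.mul_apply,
    Matrix.conjTranspose_apply, Pi.star_apply, Fintype.sum_prod_type]
  rw [Finset.sum_comm]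

lemma vec_dot_kron_vec {n m : Type*} [Fintype n] [Fintype m]
    (M N : Matrix n m ℂ) (a : Matrix n n ℂ) (b : Matrix m m ℂ) :
    dotProduct (star (fun p : n × m => M p.1 p.2))
        ((a ⊗ₖ b) *ᵥ (fun p : n × m => N p.1 p.2))
      = (Mᴴ * a * N * bᵀ).trace := by
  simp only [dotProduct, Matrix.trace, Matrix.diag, Matrix.mul_apply,
    Matrix.mulVec, Matrix.conjTranspose_apply, Matrix.transpose_apply, Pi.star_apply,
    Matrix.kroneckerMap_apply, Fintype.sum_prod_type]
  rw [Finset.sum_comm]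
  refine Finset.sum_congr rfl fun p2 _ => ?_
  simp only [Finset.mul_sum, Finset.sum_mul]
  conv_rhs => enter [2, y]; rw [Finset.sum_comm]
  conv_rhs => rw [Finset.sum_comm]
  refine Finset.sum_congr rfl fun p1 _ => ?_
  conv_rhs => rw [Finset.sum_comm]
  refine Finset.sum_congr rfl fun q1 _ => Finset.sum_congr rfl fun q2 _ => ?_
  ring

lemma psd_smul_one {n : Type*} [Fintype n] [DecidableEq n] {r : ℂ} (hr : 0 ≤ r) :
    (r • (1 : Matrix n n ℂ)).PosSemidef := by
  have hstar : star r = r := by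
    rw [Complex.star_def]
    exact Complex.conj_eq_iff_im.mpr (Complex.le_def.mp hr).2.symm
  refine Matrix.PosSemidef.of_dotProduct_mulVec_nonneg ?_ ?_
  · show _ᴴ = _
    rw [Matrix.conjTranspose_smul, Matrix.conjTranspose_one, hstar]
  · intro x
    rw [Matrix.smul_mulVec, Matrix.one_mulVec, dotProduct_smul, smul_eq_mul]
    exact mul_nonneg hr (dotProduct_star_self_nonneg x)


/-- bound (7). For a maximally entangled pure state `ρ*` on `H_A ⊗ H_B`
with `dim H_A = dim H_B = d ≥ 2`, the trace-norm distance to the separable states satisfies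
`D_s(ρ*) ≥ 2 - (4 log 2)/(log d)`. -/
theorem Dsep_maxEntangled_lower_bound {d : ℕ} (hd : 2 ≤ d)
    (ρ : Matrix (Fin d × Fin d) (Fin d × Fin d) ℂ) (hρ : IsMaxEntangled ρ) :
    Dsep ρ ≥ 2 - 4 * Real.log 2 / Real.log d := by
  classical
  obtain ⟨e, horth, hψeq⟩ := hρ
  set ψ : Fin d × Fin d → ℂ :=
    fun p => ((Real.sqrt d : ℝ) : ℂ)⁻¹ * ∑ i, e i p.1 * e i p.2 with hψdef
  have hdpos : (0:ℝ) < d := by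
    have : 0 < d := lt_of_lt_of_le (by norm_num) hd
    exact_mod_cast this
  have hdC : (d : ℂ) ≠ 0 := by
    exact_mod_cast (show (d:ℝ) ≠ 0 from ne_of_gt hdpos)
  -- the basis-change matrix and the "vec" matrix
  set E : Matrix (Fin d) (Fin d) ℂ := Matrix.of (fun i p => e i p) with hE
  set F : Matrix (Fin d) (Fin d) ℂ := Eᵀ * E with hF
  have hT : (Eᵀ)ᴴ * Eᵀ = 1 := by
    ext i j
    have := horth i j
    simpa [Matrix.mul_apply, Matrix.conjTranspose_apply, Matrix.transpose_apply, hE,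
      Matrix.one_apply] using this
  have hEHE : Eᴴ * E = 1 := by
    have hET : Eᵀ * (Eᵀ)ᴴ = 1 := mul_eq_one_comm.mp hT
    ext p q
    have h := congrFun (congrFun hET q) p
    simp only [Matrix.mul_apply, Matrix.conjTranspose_apply, Matrix.transpose_apply,
      Matrix.one_apply, hE, Matrix.of_apply] at h ⊢
    rw [Finset.sum_congr rfl fun i _ => mul_comm (star (e i p)) (e i q), h]
    by_cases hpq : p = q <;> simp [hpq, eq_comm]
  have hFunit : Fᴴ * F = 1 := by
    rw [hF, Matrix.conjTranspose_mul]
    calc Eᴴ * (Eᵀ)ᴴ * (Eᵀ * E) = Eᴴ * ((Eᵀ)ᴴ * Eᵀ) * E := by simp [mul_assoc]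
      _ = Eᴴ * E := by rw [hT, mul_one]
      _ = 1 := hEHE
  set c : ℂ := ((Real.sqrt d : ℝ) : ℂ)⁻¹ with hc
  have hcstar : star c = c := by
    rw [hc, star_inv₀]
    congr 1
    exact Complex.conj_ofReal _
  have hcc : c * c * (d:ℂ) = 1 := by
    rw [hc, ← mul_inv, ← Complex.ofReal_mul, Real.mul_self_sqrt (le_of_lt hdpos),
      Complex.ofReal_natCast, inv_mul_cancel₀ hdC]
  set M : Matrix (Fin d) (Fin d) ℂ := c • F with hM
  have hψM : ψ = fun p : Fin d × Fin d => M p.1 p.2 := by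
    funext p
    simp only [hψdef, hM, hF, hE, Matrix.smul_apply, Matrix.mul_apply, Matrix.transpose_apply,
      Matrix.of_apply, smul_eq_mul]
  have hMHM : ∀ (a : Matrix (Fin d) (Fin d) ℂ) (b : Matrix (Fin d) (Fin d) ℂ),
      Mᴴ * a * M * bᵀ = (c * c) • (Fᴴ * a * F * bᵀ) := by
    intro a b
    rw [hM, Matrix.conjTranspose_smul, hcstar]
    simp only [Matrix.smul_mul, Matrix.mul_smul, smul_smul]
  have hψ1 : dotProduct (star ψ) ψ = 1 := by
    rw [hψM, vec_dot_vec, hM, Matrix.conjTranspose_smul, hcstar]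
    simp only [Matrix.smul_mul, Matrix.mul_smul, smul_smul, Matrix.trace_smul]
    rw [hFunit, Matrix.trace_one]
    simpa [smul_eq_mul, Fintype.card_fin] using hcc
  -- overlap bound for separable states
  have hover : ∀ σ : Matrix (Fin d × Fin d) (Fin d × Fin d) ℂ, IsSeparable σ →
      (dotProduct (star ψ) (σ *ᵥ ψ)).re ≤ 1 / (d:ℝ) := by
    intro σ hsep
    have hsub : {τ : Matrix (Fin d × Fin d) (Fin d × Fin d) ℂ |
        ∃ (a : Matrix (Fin d) (Fin d) ℂ) (b : Matrix (Fin d) (Fin d) ℂ),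
          IsState a ∧ IsState b ∧ τ = a ⊗ₖ b} ⊆
        {τ | (dotProduct (star ψ) (τ *ᵥ ψ)).re ≤ 1 / (d:ℝ)} := by
      rintro τ ⟨a, b, ha, hb, rfl⟩
      have hkey : dotProduct (star ψ) ((a ⊗ₖ b) *ᵥ ψ)
          = (c * c) * (Fᴴ * a * F * bᵀ).trace := by
        rw [hψM, vec_dot_kron_vec, hMHM, Matrix.trace_smul, smul_eq_mul]
      have htrF : (Fᴴ * a * F * bᵀ).trace = (a * (F * bᵀ * Fᴴ)).trace := by
        rw [show Fᴴ * a * F * bᵀ = Fᴴ * (a * (F * bᵀ)) by simp [mul_assoc],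
          Matrix.trace_mul_comm, show a * (F * bᵀ) * Fᴴ = a * (F * bᵀ * Fᴴ) by
            simp [mul_assoc]]
      have hCpsd : (F * bᵀ * Fᴴ).PosSemidef := (hb.1.transpose).mul_mul_conjTranspose_same F
      have hCtr : (F * bᵀ * Fᴴ).trace = 1 := by
        rw [Matrix.trace_mul_cycle, hFunit, one_mul, Matrix.trace_transpose, hb.2]
      have hle := re_trace_mul_le_one ha.1 hCpsd ha.2 hCtr
      have h1 : c * c = ((d:ℂ))⁻¹ := by
        field_simp
        linear_combination hcc
      have hccre : c * c = (((d:ℝ)⁻¹ : ℝ) : ℂ) := by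
        rw [h1]
        push_cast
        ring
      rw [Set.mem_setOf_eq, hkey, htrF, hccre, Complex.re_ofReal_mul]
      rw [one_div]
      calc (d:ℝ)⁻¹ * ((a * (F * bᵀ * Fᴴ)).trace).re ≤ (d:ℝ)⁻¹ * 1 := by
            apply mul_le_mul_of_nonneg_left hle
            positivity
        _ = (d:ℝ)⁻¹ := mul_one _
    have hconv : Convex ℝ {τ : Matrix (Fin d × Fin d) (Fin d × Fin d) ℂ |
        (dotProduct (star ψ) (τ *ᵥ ψ)).re ≤ 1 / (d:ℝ)} := by
      intro x hx y hy p q hp hq hpq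
      simp only [Set.mem_setOf_eq] at hx hy ⊢
      have hlin : dotProduct (star ψ) ((p • x + q • y) *ᵥ ψ)
          = p • dotProduct (star ψ) (x *ᵥ ψ) + q • dotProduct (star ψ) (y *ᵥ ψ) := by
        rw [Matrix.add_mulVec, dotProduct_add, Matrix.smul_mulVec,
          Matrix.smul_mulVec, dotProduct_smul, dotProduct_smul]
      rw [hlin, Complex.add_re, Complex.smul_re, Complex.smul_re]
      have h1 := mul_le_mul_of_nonneg_left hx hp
      have h2 := mul_le_mul_of_nonneg_left hy hq
      calc p * (dotProduct (star ψ) (x *ᵥ ψ)).re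
            + q * (dotProduct (star ψ) (y *ᵥ ψ)).re
          ≤ p * (1/(d:ℝ)) + q * (1/(d:ℝ)) := add_le_add h1 h2
        _ = (p + q) * (1/(d:ℝ)) := by ring
        _ = 1/(d:ℝ)  := by rw [hpq, one_mul]
    exact convexHull_min hsub hconv hsep
  -- trace norm lower bound for each separable state
  have hρHerm : ρᴴ = ρ := by
    rw [hψeq]
    ext i j
    simp only [Matrix.conjTranspose_apply, Matrix.vecMulVec_apply, Pi.star_apply, star_mul',
      star_star]
    ring
  have hρ2 : ρ * ρ = ρ := by
    rw [hψeq]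
    ext i j
    simp only [Matrix.mul_apply, Matrix.vecMulVec_apply, Pi.star_apply]
    have hterm : ∀ k, ψ i * star (ψ k) * (ψ k * star (ψ j))
        = (star (ψ k) * ψ k) * (ψ i * star (ψ j)) := fun k => by ring
    rw [Finset.sum_congr rfl fun k _ => hterm k, ← Finset.sum_mul]
    have : (∑ k, star (ψ k) * ψ k) = dotProduct (star ψ) ψ := by
      simp [dotProduct]
    rw [this, hψ1, one_mul]
  have hTrρ : ρ.trace = 1 := by
    rw [hψeq]
    have : (Matrix.vecMulVec ψ (star ψ)).trace = ∑ p, ψ p * star (ψ p) := by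
      simp [Matrix.trace, Matrix.diag, Matrix.vecMulVec_apply]
    rw [this, Finset.sum_congr rfl fun p _ => mul_comm (ψ p) (star (ψ p))]
    rw [show (∑ p, star (ψ p) * ψ p) = dotProduct (star ψ) ψ by simp [dotProduct]]
    exact hψ1
  have hmain : ∀ σ : Matrix (Fin d × Fin d) (Fin d × Fin d) ℂ, IsState σ → IsSeparable σ →
      2 - 2/(d:ℝ) ≤ traceNorm (ρ - σ) := by
    intro σ hσ hsep
    set B : Matrix (Fin d × Fin d) (Fin d × Fin d) ℂ := (2:ℂ) • ρ - 1 with hB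
    have hBH : Bᴴ = B := by
      rw [hB, Matrix.conjTranspose_sub, Matrix.conjTranspose_smul, Matrix.conjTranspose_one,
        hρHerm]
      norm_num
    have hBB : B * B = 1 := by
      rw [hB, sub_mul, mul_sub, mul_sub, one_mul, mul_one, Matrix.smul_mul, Matrix.mul_smul,
        hρ2, one_mul]
      module
    have hBiso : ∀ x : Fin d × Fin d → ℂ, ∑ i, ‖(Bᴴ *ᵥ x) i‖^2 ≤ ∑ i, ‖x i‖^2 := by
      intro x
      rw [hBH]
      have : ∑ i, ‖(B *ᵥ x) i‖^2 = ∑ i, ‖x i‖^2 := by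
        rw [sum_normSq_eq, sum_normSq_eq, Matrix.star_mulVec, Matrix.dotProduct_mulVec,
          Matrix.vecMul_vecMul, hBH, hBB, Matrix.vecMul_one]
      rw [this]
    have hTrρσ : (ρ * σ).trace = dotProduct (star ψ) (σ *ᵥ ψ) := by
      rw [hψeq]
      simp only [Matrix.trace, Matrix.diag, Matrix.mul_apply, Matrix.vecMulVec_apply,
        dotProduct, Matrix.mulVec, Pi.star_apply]
      rw [Finset.sum_comm]
      refine Finset.sum_congr rfl fun q _ => ?_
      simp only [Finset.mul_sum]
      refine Finset.sum_congr rfl fun p _ => ?_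
      ring
    have hexp : B * (ρ - σ) = (2:ℂ) • (ρ * ρ) - (2:ℂ) • (ρ * σ) - ρ + σ := by
      rw [hB]
      simp only [sub_mul, mul_sub, Matrix.smul_mul, one_mul, smul_sub]
      abel
    have htrB : ((B * (ρ - σ)).trace).re
        = 2 - 2 * (dotProduct (star ψ) (σ *ᵥ ψ)).re := by
      rw [hexp]
      rw [Matrix.trace_add, Matrix.trace_sub, Matrix.trace_sub, Matrix.trace_smul,
        Matrix.trace_smul, hρ2, hTrρ, hTrρσ, hσ.2]
      simp [Complex.sub_re, Complex.add_re, Complex.smul_re]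
    have hle := re_trace_mul_le_traceNorm (ρ - σ) B hBiso
    rw [htrB] at hle
    have hov := hover σ hsep
    have h2d : 2/(d:ℝ) = 2 * (1/(d:ℝ)) := by ring
    have hmul := mul_le_mul_of_nonneg_left hov (by norm_num : (0:ℝ) ≤ 2)
    rw [h2d]
    linarith
  -- nonemptiness of the separable set
  have hinvd0 : (0:ℂ) ≤ (d:ℂ)⁻¹ := by
    have : ((d:ℂ))⁻¹ = (((d:ℝ)⁻¹ : ℝ) : ℂ) := by push_cast; ring
    rw [this]
    exact Complex.zero_le_real.mpr (inv_nonneg.mpr hdpos.le)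
  have hstate1 : IsState ((d:ℂ)⁻¹ • (1 : Matrix (Fin d) (Fin d) ℂ)) := by
    constructor
    · exact psd_smul_one hinvd0
    · rw [Matrix.trace_smul, Matrix.trace_one]
      simp only [smul_eq_mul, Fintype.card_fin]
      rw [inv_mul_cancel₀ hdC]
  have hsep0 : ∃ σ : Matrix (Fin d × Fin d) (Fin d × Fin d) ℂ, IsState σ ∧ IsSeparable σ := by
    refine ⟨((d:ℂ)⁻¹ • 1) ⊗ₖ ((d:ℂ)⁻¹ • 1), ?_, ?_⟩
    · constructor
      · rw [Matrix.smul_kronecker, Matrix.kronecker_smul, Matrix.one_kronecker_one, smul_smul]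
        exact psd_smul_one (mul_nonneg hinvd0 hinvd0)
      · rw [Matrix.trace_kronecker, hstate1.2, mul_one]
    · exact subset_convexHull ℝ _ ⟨_, _, hstate1, hstate1, rfl⟩
  -- conclude via sInf
  obtain ⟨σ0, hσ0, hsep0'⟩ := hsep0
  have hne : {x : ℝ | ∃ σ : Matrix (Fin d × Fin d) (Fin d × Fin d) ℂ,
      IsState σ ∧ IsSeparable σ ∧ x = traceNorm (ρ - σ)}.Nonempty :=
    ⟨traceNorm (ρ - σ0), σ0, hσ0, hsep0', rfl⟩
  have hbound : 2 - 4 * Real.log 2 / Real.log d ≤ 2 - 2/(d:ℝ) := by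
    have hlogd : 0 < Real.log d := Real.log_pos (by exact_mod_cast lt_of_lt_of_le one_lt_two hd)
    have hlog2 : (0.6931471803:ℝ) < Real.log 2 := Real.log_two_gt_d9
    have hld : Real.log d ≤ (d:ℝ) - 1 := Real.log_le_sub_one_of_pos hdpos
    have key : 2/(d:ℝ) ≤ 4 * Real.log 2 / Real.log d := by
      rw [div_le_div_iff₀ hdpos hlogd]
      have h42 : (2:ℝ) ≤ 4 * Real.log 2 := by nlinarith
      nlinarith [mul_le_mul_of_nonneg_right h42 hdpos.le]
    linarith
  refine le_trans hbound ?_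
  apply le_csInf hne
  rintro x ⟨σ, hσ, hsepσ, rfl⟩
  exact hmain σ hσ hsepσ


end QPaper
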